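/- For any vertex x ≠ o, the multiplication operator M_x = M_{δ_x} on H_E is the rank-one operator M_x = |δ_x⟩⟨v_x|, i.e., M_x u = ⟨v_x, u⟩_E · δ_x for all u ∈ H_E; equivalently its adjoint is M_x* = |v_x⟩⟨δ_x|, i.e., M_x* u = ⟨δ_x, u⟩_E · v_x. -/

import Mathlib

open scoped InnerProductSpace ComplexOrder BigOperators Classical

/-- Dirac's rank-one operator `|a⟩⟨b| : u ↦ ⟪b,u⟫ • a`. -/
noncomputable def rankOne {H : Type*} [NormedAddCommGroup H] [InnerProductSpace ℂ H]
    (a b : H) : H →L[ℂ] H := (innerSL ℂ b).smulRight a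

/-- the multiplication operator `M_x` by the Dirac mass `δ_x`
(`x ≠ o`) is the rank-one operator `|δ_x⟩⟨v_x|`: `M_x u = ⟪v_x,u⟫ • δ_x`, and
its adjoint is `|v_x⟩⟨δ_x|`: `M_x* u = ⟪δ_x,u⟫ • v_x`. -/
theorem stmt11 {V H : Type*} [NormedAddCommGroup H] [InnerProductSpace ℂ H] [CompleteSpace H]
    (o x : V) (hx : x ≠ o) (v : V → H) (δx : H)
    (hdense : Dense (↑(Submodule.span ℂ (v '' {y | y ≠ o})) : Set H))
    (hδ : ∀ y : V, y ≠ o → ⟪v y, δx⟫_ℂ = if y = x then 1 else 0)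
    (M : H →L[ℂ] H)
    (hM : ∀ (u : H) (y : V), y ≠ o →
      ⟪v y, M u⟫_ℂ = (if y = x then (1 : ℂ) else 0) * ⟪v y, u⟫_ℂ) :
    ∀ u : H, M u = ⟪v x, u⟫_ℂ • δx ∧
      ContinuousLinearMap.adjoint M u = ⟪δx, u⟫_ℂ • v x := by
  have key : ∀ u : H, M u = ⟪v x, u⟫_ℂ • δx := by
    intro u
    refine hdense.eq_of_inner_right ℂ fun w (hw : w ∈ Submodule.span ℂ (v '' {y | y ≠ o})) => ?_
    induction hw using Submodule.span_induction with
    | mem w hw =>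
      obtain ⟨y, hy, rfl⟩ := hw
      rw [hM u y hy, inner_smul_right, hδ y hy]
      by_cases h : y = x
      · subst h; simp
      · simp [h]
    | zero => simp
    | add a b _ _ ha hb => simp [inner_add_left, ha, hb]; ring
    | smul c a _ ha => simp [inner_smul_left, ha]; ring
  intro u
  refine ⟨key u, ?_⟩
  refine ext_inner_right ℂ fun w => ?_
  rw [ContinuousLinearMap.adjoint_inner_left, key w, inner_smul_right,
    inner_smul_left, ← inner_conj_symm δx u]
  simp [mul_comm]
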